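/- Let G be a finite abelian group that is {1,2,3}-decomposable. Then G is isomorphic to Z₆, the cyclic group of order 6. -/

import Mathlib

/-- `ncc A` is the number of conjugacy classes of `G` contained in the subgroup `A`. -/
noncomputable def ncc {G : Type*} [Group G] (A : Subgroup G) : ℕ :=
  Nat.card {c : ConjClasses G // c.carrier ⊆ (A : Set G)}

/-- `KG G` is the set of values `ncc A` for `A` a proper normal subgroup of `G`. -/
def KG (G : Type*) [Group G] : Set ℕ :=
  {n | ∃ A : Subgroup G, A.Normal ∧ A ≠ ⊤ ∧ ncc A = n}

/-- `G` is `X`-decomposable if `KG G = X`. -/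
def XDecomposable (G : Type*) [Group G] (X : Set ℕ) : Prop := KG G = X

lemma ncc_eq_card_of_comm {G : Type*} [Group G] (hab : ∀ a b : G, a * b = b * a)
    (A : Subgroup G) : ncc A = Nat.card A := by
  letI : CommGroup G := { ‹Group G› with mul_comm := hab }
  unfold ncc
  refine Nat.card_congr ?_
  have hinj : Function.Injective (ConjClasses.mk (α := G)) := fun a b hh =>
    isConj_iff_eq.mp (ConjClasses.mk_eq_mk_iff_isConj.mp hh)
  refine ((Equiv.ofBijective (ConjClasses.mk (α := G))
    ⟨hinj, ConjClasses.mk_surjective⟩).subtypeEquiv ?_).symm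
  intro g
  show g ∈ A ↔ (ConjClasses.mk g).carrier ⊆ (A : Set G)
  constructor
  · intro hg x hx
    rw [ConjClasses.mem_carrier_iff_mk_eq] at hx
    have : x = g := isConj_iff_eq.mp (ConjClasses.mk_eq_mk_iff_isConj.mp hx)
    rwa [this]
  · intro hsub
    exact hsub (ConjClasses.mem_carrier_iff_mk_eq.mpr rfl)

/-- A finite abelian `{1,2,3}`-decomposable group is isomorphic to the cyclic group `Z₆`. -/
theorem abelian_123_decomposable {G : Type*} [Group G] [Finite G]
    (hab : ∀ a b : G, a * b = b * a)
    (h : XDecomposable G {1, 2, 3}) :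
    Nonempty (G ≃* Multiplicative (ZMod 6)) := by
  cases nonempty_fintype G
  have hK : KG G = {1, 2, 3} := h
  have h2 : (2 : ℕ) ∈ KG G := by rw [hK]; simp
  have h3 : (3 : ℕ) ∈ KG G := by rw [hK]; simp
  obtain ⟨A, -, -, hA⟩ := h2
  obtain ⟨B, -, -, hB⟩ := h3
  rw [ncc_eq_card_of_comm hab] at hA hB
  have hAd : Nat.card A ∣ Nat.card G := Subgroup.card_subgroup_dvd_card A
  have hBd : Nat.card B ∣ Nat.card G := Subgroup.card_subgroup_dvd_card B
  rw [hA] at hAd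
  rw [hB] at hBd
  rw [Nat.card_eq_fintype_card] at hAd hBd
  obtain ⟨a, ha⟩ := exists_prime_orderOf_dvd_card 2 hAd
  obtain ⟨b, hb⟩ := exists_prime_orderOf_dvd_card 3 hBd
  have hco : (orderOf a).Coprime (orderOf b) := by rw [ha, hb]; norm_num
  have h6 : orderOf (a * b) = 6 := by
    rw [(show Commute a b from hab a b).orderOf_mul_eq_mul_orderOf_of_coprime hco, ha, hb]
  set H := Subgroup.zpowers (a * b) with hHdef
  have hHcard : Nat.card H = 6 := by rw [hHdef, Nat.card_zpowers, h6]
  have hHnormal : H.Normal := by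
    constructor
    intro n hn g
    have : g * n * g⁻¹ = n := by rw [hab g n, mul_assoc, mul_inv_cancel, mul_one]
    rwa [this]
  have hHtop : H = ⊤ := by
    by_contra hne
    have : (6 : ℕ) ∈ KG G := ⟨H, hHnormal, hne, by rw [ncc_eq_card_of_comm hab, hHcard]⟩
    rw [hK] at this
    simp at this
  have hcyc : IsCyclic G := ⟨a * b, fun x => show x ∈ H by rw [hHtop]; trivial⟩
  have hGcard : Nat.card G = 6 := by
    rw [← Nat.card_eq_fintype_card] at *
    calc Nat.card G = Nat.card (⊤ : Subgroup G) := (Subgroup.card_top).symm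
    _ = Nat.card H := by rw [hHtop]
    _ = 6 := hHcard
  have e := zmodCyclicMulEquiv hcyc
  rw [hGcard] at e
  exact ⟨e.symm⟩
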